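/- Let F be a field, m ≥ n+1 natural numbers, and q(X) = Σ_{π ∈ S_m} λ_π Π_{i=1}^m x_{π(i),i} a polynomial in the entries of an m×m matrix X, with coefficients λ_π ∈ F. If q((y_i(z_j))_{i,j}) = 0 for all y_1,...,y_m ∈ V* and z_1,...,z_m ∈ V where V = F^n, i.e. q vanishes on all m×m matrices of rank ≤ n, then q lies in the ideal of F[x_{ij}] generated by the (n+1)×(n+1) minors of X. -/

import Mathlib

open MvPolynomial

/-- The generic `m×m` matrix of indeterminates. -/
noncomputable def genericMatrix (F : Type*) [Field F] (m : ℕ) :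
    Matrix (Fin m) (Fin m) (MvPolynomial (Fin m × Fin m) F) :=
  fun i j => MvPolynomial.X (i, j)

open Finset Equiv

variable {m : ℕ}

/-- Number of inversions of a permutation of `Fin m`. -/
def invCount (f : Equiv.Perm (Fin m)) : ℕ :=
  ∑ p : Fin m × Fin m, if p.1 < p.2 ∧ f p.2 < f p.1 then 1 else 0

/-- An involution on pairs used to compare inversions of `f` and `f * swap u v`. -/
def bmap (u v : Fin m) (p : Fin m × Fin m) : Fin m × Fin m :=
  if p.1 < u ∧ (p.2 = u ∨ p.2 = v) then (p.1, Equiv.swap u v p.2)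
  else if v < p.2 ∧ (p.1 = u ∨ p.1 = v) then (Equiv.swap u v p.1, p.2)
  else p

lemma swap_mem {u v x : Fin m} (h : x = u ∨ x = v) :
    Equiv.swap u v x = u ∨ Equiv.swap u v x = v := by
  rcases h with h | h <;> subst h <;>
    simp [Equiv.swap_apply_left, Equiv.swap_apply_right]

lemma bmap_involutive (u v : Fin m) (huv : u < v) : Function.Involutive (bmap u v) := by
  intro p
  rcases p with ⟨a, b⟩
  unfold bmap
  by_cases h1 : a < u ∧ (b = u ∨ b = v)
  · rw [if_pos h1]
    have h1' : a < u ∧ (Equiv.swap u v b = u ∨ Equiv.swap u v b = v) :=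
      ⟨h1.1, swap_mem h1.2⟩
    simp only [h1', if_pos, and_self, Equiv.swap_apply_self]
  · rw [if_neg h1]
    by_cases h2 : v < b ∧ (a = u ∨ a = v)
    · rw [if_pos h2]
      have hna : ¬ (Equiv.swap u v a < u ∧ (b = u ∨ b = v)) := by
        rintro ⟨-, hb | hb⟩
        · exact (lt_asymm huv) (hb ▸ h2.1)
        · exact lt_irrefl v (hb ▸ h2.1)
      rw [if_neg hna]
      have h2' : v < b ∧ (Equiv.swap u v a = u ∨ Equiv.swap u v a = v) :=
        ⟨h2.1, swap_mem h2.2⟩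
      rw [if_pos h2', Equiv.swap_apply_self]
    · rw [if_neg h2, if_neg h1, if_neg h2]

lemma ind_le (f : Equiv.Perm (Fin m)) {u v : Fin m} (huv : u < v) (hf : f u < f v)
    (p : Fin m × Fin m) :
    (if p.1 < p.2 ∧ f p.2 < f p.1 then (1:ℕ) else 0) ≤
      (if (bmap u v p).1 < (bmap u v p).2 ∧
          (f * Equiv.swap u v) (bmap u v p).2 < (f * Equiv.swap u v) (bmap u v p).1
        then 1 else 0) := by
  rcases p with ⟨a, b⟩
  by_cases hab : a < b
  · unfold bmap
    by_cases h1 : a < u ∧ (b = u ∨ b = v)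
    · rw [if_pos h1]
      have hau : a ≠ u := ne_of_lt h1.1
      have hav : a ≠ v := ne_of_lt (h1.1.trans huv)
      have hga : (f * Equiv.swap u v) a = f a := by
        simp [Equiv.Perm.mul_apply, Equiv.swap_apply_of_ne_of_ne hau hav]
      have hgb : (f * Equiv.swap u v) (Equiv.swap u v b) = f b := by
        simp [Equiv.Perm.mul_apply]
      have hlt : a < Equiv.swap u v b := by
        rcases h1.2 with hb | hb <;> subst hb
        · rw [Equiv.swap_apply_left]; exact h1.1.trans huv
        · rw [Equiv.swap_apply_right]; exact h1.1
      simp only [hga, hgb, hlt, true_and, hab]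
      exact le_refl _
    · rw [if_neg h1]
      by_cases h2 : v < b ∧ (a = u ∨ a = v)
      · rw [if_pos h2]
        have hbu : b ≠ u := (huv.trans h2.1).ne'
        have hbv : b ≠ v := h2.1.ne'
        have hgb : (f * Equiv.swap u v) b = f b := by
          simp [Equiv.Perm.mul_apply, Equiv.swap_apply_of_ne_of_ne hbu hbv]
        have hga : (f * Equiv.swap u v) (Equiv.swap u v a) = f a := by
          simp [Equiv.Perm.mul_apply]
        have hlt : Equiv.swap u v a < b := by
          rcases h2.2 with ha | ha <;> subst ha
          · rw [Equiv.swap_apply_left]; exact h2.1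
          · rw [Equiv.swap_apply_right]; exact huv.trans h2.1
        simp only [hga, hgb, hlt, true_and, hab]
        exact le_refl _
      · rw [if_neg h2]
        by_cases hau : a = u
        · by_cases hbv : b = v
          · rw [hau, hbv]
            simp [hf.not_gt]
          · have hbltv : b < v := by
              rcases lt_trichotomy b v with h | h | h
              · exact h
              · exact absurd h hbv
              · exact absurd ⟨h, Or.inl hau⟩ h2
            have hbu : b ≠ u := by rw [← hau]; exact hab.ne'
            have hgb : (f * Equiv.swap u v) b = f b := by
              simp [Equiv.Perm.mul_apply, Equiv.swap_apply_of_ne_of_ne hbu hbv]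
            have hga : (f * Equiv.swap u v) a = f v := by
              rw [hau]
              simp [Equiv.Perm.mul_apply, Equiv.swap_apply_left]
            simp only [hga, hgb, hab, true_and]
            rw [hau]
            split_ifs with hx hy hy
            · exact le_refl _
            · exact absurd (hx.trans hf) hy
            · exact Nat.zero_le _
            · exact le_refl _
        · by_cases hav : a = v
          · exact absurd ⟨hav ▸ hab, Or.inr hav⟩ h2
          · by_cases hbu : b = u
            · exact absurd ⟨hbu ▸ hab, Or.inl hbu⟩ h1
            · by_cases hbv : b = v
              · have hga : (f * Equiv.swap u v) a = f a := by
                  simp [Equiv.Perm.mul_apply, Equiv.swap_apply_of_ne_of_ne hau hav]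
                have hgb : (f * Equiv.swap u v) b = f u := by
                  rw [hbv]
                  simp [Equiv.Perm.mul_apply, Equiv.swap_apply_right]
                simp only [hga, hgb, hab, true_and]
                rw [hbv]
                split_ifs with hx hy hy
                · exact le_refl _
                · exact absurd (hf.trans hx) hy
                · exact Nat.zero_le _
                · exact le_refl _
              · have hga : (f * Equiv.swap u v) a = f a := by
                  simp [Equiv.Perm.mul_apply, Equiv.swap_apply_of_ne_of_ne hau hav]
                have hgb : (f * Equiv.swap u v) b = f b := by
                  simp [Equiv.Perm.mul_apply, Equiv.swap_apply_of_ne_of_ne hbu hbv]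
                simp only [hga, hgb]
                exact le_refl _
  · rw [if_neg (by tauto)]
    exact Nat.zero_le _

lemma invCount_lt_mul_swap (f : Equiv.Perm (Fin m)) {u v : Fin m} (huv : u < v)
    (hf : f u < f v) : invCount f < invCount (f * Equiv.swap u v) := by
  set g := f * Equiv.swap u v with hg
  have hbm := bmap_involutive u v huv
  have key : invCount f <
      ∑ p : Fin m × Fin m,
        (if (bmap u v p).1 < (bmap u v p).2 ∧ g (bmap u v p).2 < g (bmap u v p).1
          then 1 else 0) := by
    apply Finset.sum_lt_sum
    · intro p _
      exact ind_le f huv hf p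
    · refine ⟨(u, v), Finset.mem_univ _, ?_⟩
      have hb : bmap u v (u, v) = (u, v) := by
        unfold bmap
        rw [if_neg (by simp), if_neg (by simp)]
      rw [hb]
      have hgu : g u = f v := by simp [hg, Equiv.Perm.mul_apply, Equiv.swap_apply_left]
      have hgv : g v = f u := by simp [hg, Equiv.Perm.mul_apply, Equiv.swap_apply_right]
      rw [if_neg (fun h => hf.not_gt h.2), if_pos ⟨huv, by rw [hgu, hgv]; exact hf⟩]
      exact Nat.zero_lt_one
  calc invCount f < _ := key
    _ = invCount g := Equiv.sum_comp hbm.toPerm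
        (fun p : Fin m × Fin m => if p.1 < p.2 ∧ g p.2 < g p.1 then (1:ℕ) else 0)

section fiber
variable {α : Type*}

/-- A nontrivial permutation preserving the fibers of `d` has an inversion inside a fiber. -/
lemma exists_fiber_inversion (d : Fin m → α) (τ : Equiv.Perm (Fin m))
    (hd : ∀ x, d (τ x) = d x) (hτ : τ ≠ 1) :
    ∃ u v : Fin m, u < v ∧ d u = d v ∧ τ v < τ u := by
  have : ∃ i, τ i ≠ i := by
    by_contra h
    push_neg at h
    exact hτ (Equiv.ext h)
  obtain ⟨i, hi⟩ := this
  classical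
  set M : Finset (Fin m) := Finset.univ.filter (fun x => d x = d i ∧ τ x ≠ x) with hM
  have hne : M.Nonempty := ⟨i, by simp [hM, hi]⟩
  set u := M.min' hne with hu
  have humem : u ∈ M := M.min'_mem hne
  have hud : d u = d i := (Finset.mem_filter.mp humem).2.1
  have huτ : τ u ≠ u := (Finset.mem_filter.mp humem).2.2
  set v := τ⁻¹ u with hv
  have hτv : τ v = u := by simp [hv]
  have hvd : d v = d u := by
    have := hd v
    rw [hτv] at this
    exact this.symm
  have hvu : v ≠ u := by
    intro h
    rw [h] at hτv
    exact huτ hτv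
  have hvM : v ∈ M := by
    refine Finset.mem_filter.mpr ⟨Finset.mem_univ _, hvd.trans hud, ?_⟩
    rw [hτv]
    exact Ne.symm hvu
  have huv : u < v := lt_of_le_of_ne (M.min'_le v hvM) (Ne.symm hvu)
  have hτu : u < τ u := by
    rcases lt_trichotomy (τ u) u with h | h | h
    · exfalso
      have hτuM : τ u ∈ M := by
        refine Finset.mem_filter.mpr ⟨Finset.mem_univ _, (hd u).trans hud, ?_⟩
        intro hcon
        exact huτ (τ.injective hcon)
      exact absurd (M.min'_le (τ u) hτuM) (not_le.mpr h)
    · exact absurd h huτ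
    · exact h
  exact ⟨u, v, huv, hvd.symm, by rw [hτv]; exact hτu⟩

/-- Multiplying a fiber-increasing permutation by a nontrivial fiber-preserving
permutation strictly increases the inversion count. -/
lemma invCount_lt_of_increasing (d : Fin m → α) (σ : Equiv.Perm (Fin m))
    (hσ : ∀ i j : Fin m, i < j → d i = d j → σ i < σ j) :
    ∀ (k : ℕ) (τ : Equiv.Perm (Fin m)), invCount (σ * τ) = k →
      (∀ x, d (τ x) = d x) → τ ≠ 1 → invCount σ < invCount (σ * τ) := by
  intro k
  induction k using Nat.strong_induction_on with
  | _ k ih =>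
    intro τ hk hd hτ
    obtain ⟨u, v, huv, hduv, hinv⟩ := exists_fiber_inversion d τ hd hτ
    have hfib : d (τ u) = d (τ v) := by rw [hd, hd, hduv]
    have hστ : (σ * τ) u > (σ * τ) v := by
      have := hσ (τ v) (τ u) hinv hfib.symm
      simpa [Equiv.Perm.mul_apply] using this
    set τ' := τ * Equiv.swap u v with hτ'
    have hcomp : σ * τ' = (σ * τ) * Equiv.swap u v := by
      rw [hτ', mul_assoc]
    have hlt : invCount (σ * τ') < invCount (σ * τ) := by
      have h1 : (σ * τ') u < (σ * τ') v := by
        rw [hcomp]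
        simp only [Equiv.Perm.mul_apply, Equiv.swap_apply_left, Equiv.swap_apply_right]
        exact hστ
      have := invCount_lt_mul_swap (σ * τ') huv h1
      have h2 : (σ * τ') * Equiv.swap u v = σ * τ := by
        rw [hcomp, mul_assoc, Equiv.swap_mul_self, mul_one]
      rwa [h2] at this
    by_cases hτ'1 : τ' = 1
    · have : σ * τ' = σ := by rw [hτ'1, mul_one]
      rw [this] at hlt
      exact hlt
    · have hd' : ∀ x, d (τ' x) = d x := by
        intro x
        rw [hτ']
        simp only [Equiv.Perm.mul_apply]
        rw [hd]
        rcases eq_or_ne x u with h | hxu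
        · rw [h, Equiv.swap_apply_left, ← hduv]
        · rcases eq_or_ne x v with h | hxv
          · rw [h, Equiv.swap_apply_right, hduv]
          · rw [Equiv.swap_apply_of_ne_of_ne hxu hxv]
      have := ih (invCount (σ * τ')) (hk ▸ hlt) τ' rfl hd' hτ'1
      exact this.trans hlt

lemma invCount_rev_add (f : Equiv.Perm (Fin m)) :
    invCount ((Fin.revPerm : Equiv.Perm (Fin m)) * f) + invCount f =
      ∑ p : Fin m × Fin m, if p.1 < p.2 then 1 else 0 := by
  unfold invCount
  rw [← Finset.sum_add_distrib]
  apply Finset.sum_congr rfl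
  intro p _
  rcases p with ⟨a, b⟩
  by_cases hab : a < b
  · have hne : f b ≠ f a := fun h => (hab.ne (f.injective h.symm)).elim
    simp only [hab, true_and, if_pos]
    rcases lt_or_gt_of_ne hne with h | h
    · rw [if_neg (by simp [Equiv.Perm.mul_apply, Fin.rev_lt_rev]; exact h.le),
        if_pos h]
    · rw [if_pos (by simp [Equiv.Perm.mul_apply, Fin.rev_lt_rev]; exact h),
        if_neg (by exact fun hc => (lt_asymm h) hc)]
  · simp [hab]

/-- Multiplying a fiber-decreasing permutation by a nontrivial fiber-preserving
permutation strictly decreases the inversion count. -/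
lemma invCount_lt_of_decreasing (d : Fin m → α) (σ : Equiv.Perm (Fin m))
    (hσ : ∀ i j : Fin m, i < j → d i = d j → σ j < σ i)
    (τ : Equiv.Perm (Fin m)) (hd : ∀ x, d (τ x) = d x) (hτ : τ ≠ 1) :
    invCount (σ * τ) < invCount σ := by
  have hσ' : ∀ i j : Fin m, i < j → d i = d j → ((Fin.revPerm : Equiv.Perm (Fin m)) * σ) i < ((Fin.revPerm : Equiv.Perm (Fin m)) * σ) j := by
    intro i j hij hdij
    simp only [Equiv.Perm.mul_apply]
    rw [Fin.revPerm_apply, Fin.revPerm_apply, Fin.rev_lt_rev]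
    exact hσ i j hij hdij
  have key := invCount_lt_of_increasing d ((Fin.revPerm : Equiv.Perm (Fin m)) * σ) hσ'
    (invCount (((Fin.revPerm : Equiv.Perm (Fin m)) * σ) * τ)) τ rfl hd hτ
  have e1 := invCount_rev_add σ
  have e2 := invCount_rev_add (σ * τ)
  rw [← mul_assoc] at e2
  omega
end fiber

/-- Length of the longest decreasing subsequence of `σ` ending at position `i`. -/
def lds (σ : Equiv.Perm (Fin m)) (i : Fin m) : ℕ :=
  ((Finset.univ.filter (fun j : Fin m => j < i ∧ σ i < σ j)).attach.sup
    (fun j => lds σ j.1)) + 1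
termination_by (i : ℕ)
decreasing_by
  exact (Finset.mem_filter.mp j.2).2.1

lemma lds_pos (σ : Equiv.Perm (Fin m)) (i : Fin m) : 1 ≤ lds σ i := by
  rw [lds.eq_def]
  omega

lemma lds_lt (σ : Equiv.Perm (Fin m)) {i j : Fin m} (hij : i < j) (hσ : σ j < σ i) :
    lds σ i < lds σ j := by
  conv_rhs => rw [lds.eq_def]
  have hmem : i ∈ Finset.univ.filter (fun k : Fin m => k < j ∧ σ j < σ k) := by
    simp [hij, hσ]
  have := Finset.le_sup (f := fun k : {x // x ∈ Finset.univ.filter (fun k : Fin m => k < j ∧ σ j < σ k)} => lds σ k.1)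
    (Finset.mem_attach _ ⟨i, hmem⟩)
  dsimp only at this
  omega

lemma lds_exists_pred (σ : Equiv.Perm (Fin m)) {i : Fin m} {k : ℕ} (hk : lds σ i = k + 1)
    (hk1 : 1 ≤ k) : ∃ j : Fin m, j < i ∧ σ i < σ j ∧ lds σ j = k := by
  rw [lds.eq_def] at hk
  have hsup : (Finset.univ.filter (fun j : Fin m => j < i ∧ σ i < σ j)).attach.sup
      (fun j => lds σ j.1) = k := by omega
  have hne : ((Finset.univ.filter (fun j : Fin m => j < i ∧ σ i < σ j)).attach).Nonempty := by
    by_contra h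
    rw [Finset.not_nonempty_iff_eq_empty] at h
    rw [h, Finset.sup_empty] at hsup
    simp at hsup
    omega
  obtain ⟨b, _, hb⟩ := Finset.exists_mem_eq_sup _ hne (fun j => lds σ j.1)
  refine ⟨b.1, (Finset.mem_filter.mp b.2).2.1, (Finset.mem_filter.mp b.2).2.2, ?_⟩
  omega

/-- Extract a decreasing chain of length `k+1` ending at `i` when `lds σ i ≥ k+1`. -/
lemma lds_chain (σ : Equiv.Perm (Fin m)) :
    ∀ (k : ℕ) (i : Fin m), k + 1 ≤ lds σ i →
      ∃ c : Fin (k + 1) → Fin m, StrictMono c ∧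
        (∀ l l' : Fin (k + 1), l < l' → σ (c l') < σ (c l)) ∧ c (Fin.last k) = i := by
  intro k
  induction k with
  | zero =>
    intro i _
    refine ⟨fun _ => i, fun a b hab => absurd hab (by omega), ?_, rfl⟩
    intro l l' hll'
    exact absurd hll' (by omega)
  | succ k ih =>
    intro i hi
    have h1 : lds σ i = (lds σ i - 1) + 1 := by
      have := lds_pos σ i
      omega
    obtain ⟨j, hji, hσij, hldsj⟩ := lds_exists_pred σ h1 (by omega)
    have hj : k + 1 ≤ lds σ j := by omega
    obtain ⟨c', hc'mono, hc'dec, hc'last⟩ := ih j hj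
    refine ⟨Fin.snoc c' i, ?_, ?_, by simp⟩
    · have hlt : ∀ l : Fin (k + 1), c' l < i := by
        intro l
        calc c' l ≤ c' (Fin.last k) := hc'mono.monotone (Fin.le_last l)
          _ = j := hc'last
          _ < i := hji
      intro a b hab
      rcases eq_or_ne b (Fin.last (k + 1)) with hb | hb
      · subst hb
        rw [Fin.snoc_last]
        have ha : a ≠ Fin.last (k + 1) := hab.ne
        obtain ⟨a', ha'⟩ := Fin.exists_castSucc_eq.mpr ha
        rw [← ha', Fin.snoc_castSucc]
        exact hlt a'
      · obtain ⟨b', hb'⟩ := Fin.exists_castSucc_eq.mpr hb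
        have ha : a ≠ Fin.last (k + 1) := by
          intro h
          rw [h, ← hb'] at hab
          exact absurd (hab.trans (Fin.castSucc_lt_last b')) (lt_irrefl _)
        obtain ⟨a', ha'⟩ := Fin.exists_castSucc_eq.mpr ha
        rw [← ha', ← hb', Fin.snoc_castSucc, Fin.snoc_castSucc]
        apply hc'mono
        rw [← ha', ← hb'] at hab
        exact Fin.castSucc_lt_castSucc_iff.mp hab
    · have hval : ∀ l : Fin (k + 1), σ i < σ (c' l) := by
        intro l
        rcases eq_or_ne l (Fin.last k) with h | h
        · rw [h, hc'last]; exact hσij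
        · have : l < Fin.last k := lt_of_le_of_ne (Fin.le_last l) h
          have h2 : σ (c' (Fin.last k)) < σ (c' l) := hc'dec l (Fin.last k) this
          rw [hc'last] at h2
          exact hσij.trans h2
      intro a b hab
      rcases eq_or_ne b (Fin.last (k + 1)) with hb | hb
      · subst hb
        rw [Fin.snoc_last]
        have ha : a ≠ Fin.last (k + 1) := hab.ne
        obtain ⟨a', ha'⟩ := Fin.exists_castSucc_eq.mpr ha
        rw [← ha', Fin.snoc_castSucc]
        exact hval a'
      · obtain ⟨b', hb'⟩ := Fin.exists_castSucc_eq.mpr hb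
        have ha : a ≠ Fin.last (k + 1) := by
          intro h
          rw [h, ← hb'] at hab
          exact absurd (hab.trans (Fin.castSucc_lt_last b')) (lt_irrefl _)
        obtain ⟨a', ha'⟩ := Fin.exists_castSucc_eq.mpr ha
        rw [← ha', ← hb', Fin.snoc_castSucc, Fin.snoc_castSucc]
        apply hc'dec
        rw [← ha', ← hb'] at hab
        exact Fin.castSucc_lt_castSucc_iff.mp hab

section poly
variable (F : Type*) [Field F] {m n : ℕ}

noncomputable def mon (π : Equiv.Perm (Fin m)) : MvPolynomial (Fin m × Fin m) F :=
  ∏ i : Fin m, MvPolynomial.X (π i, i)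

def minorSet (m n : ℕ) : Set (MvPolynomial (Fin m × Fin m) F) :=
  {p : MvPolynomial (Fin m × Fin m) F |
      ∃ (I J : Fin (n + 1) ↪ Fin m),
        p = Matrix.det ((genericMatrix F m).submatrix I J)}

variable {F}

lemma minor_relation (π : Equiv.Perm (Fin m)) (c : Fin (n + 1) → Fin m) (hc : StrictMono c) :
    ∑ p : Equiv.Perm (Fin (n + 1)), MvPolynomial.C ((Equiv.Perm.sign p : ℤ) : F) *
        mon F (π * (p.extendDomain (Equiv.ofInjective c hc.injective))) =
      Matrix.det ((genericMatrix F m).submatrix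
          (⟨fun k => π (c k), fun a b hab => hc.injective (π.injective hab)⟩ : Fin (n+1) ↪ Fin m)
          (⟨c, hc.injective⟩ : Fin (n+1) ↪ Fin m)) *
        ∏ i ∈ (Finset.univ.image c)ᶜ, MvPolynomial.X (π i, i) := by
  rw [Matrix.det_apply', Finset.sum_mul]
  apply Finset.sum_congr rfl
  intro p _
  have h2 : mon F (π * (p.extendDomain (Equiv.ofInjective c hc.injective))) =
      (∏ l : Fin (n+1), (MvPolynomial.X (π (c (p l)), c l) : MvPolynomial (Fin m × Fin m) F)) *
        ∏ i ∈ (Finset.univ.image c)ᶜ, MvPolynomial.X (π i, i) := by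
    unfold mon
    rw [← Finset.prod_mul_prod_compl (Finset.univ.image c)
      (fun i => MvPolynomial.X ((π * p.extendDomain (Equiv.ofInjective c hc.injective)) i, i))]
    congr 1
    · rw [Finset.prod_image (fun a _ b _ h => hc.injective h)]
      apply Finset.prod_congr rfl
      intro l _
      congr 2
      simp only [Equiv.Perm.mul_apply]
      congr 1
      have := Equiv.Perm.extendDomain_apply_image p (Equiv.ofInjective c hc.injective) l
      simp only [Equiv.ofInjective_apply] at this
      exact this
    · apply Finset.prod_congr rfl
      intro i hi
      have hnr : ¬ (i ∈ Set.range c) := by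
        simp only [Finset.mem_compl, Finset.mem_image] at hi
        rintro ⟨l, rfl⟩
        exact hi ⟨l, Finset.mem_univ l, rfl⟩
      rw [Equiv.Perm.mul_apply, Equiv.Perm.extendDomain_apply_not_subtype _ _ hnr]
  have h3 : (∏ l : Fin (n+1), ((genericMatrix F m).submatrix
          (⟨fun k => π (c k), fun a b hab => hc.injective (π.injective hab)⟩ : Fin (n+1) ↪ Fin m)
          (⟨c, hc.injective⟩ : Fin (n+1) ↪ Fin m)) (p l) l)
      = ∏ l : Fin (n+1), (MvPolynomial.X (π (c (p l)), c l) : MvPolynomial (Fin m × Fin m) F) :=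
    Finset.prod_congr rfl (fun l _ => rfl)
  rw [map_intCast, h2, h3, mul_assoc]

lemma det_AB_zero (A : Matrix (Fin (n + 1)) (Fin n) F) (B : Matrix (Fin n) (Fin (n + 1)) F) :
    Matrix.det (A * B) = 0 := by
  classical
  set B' : Matrix (Fin (n + 1)) (Fin (n + 1)) F :=
    fun i j => if h : (i : ℕ) < n then B ⟨i, h⟩ j else 0 with hB'
  have hdet : B'.det = 0 := by
    apply Matrix.det_eq_zero_of_row_eq_zero (Fin.last n)
    intro j
    simp [hB']
  obtain ⟨v, hv, hmul⟩ := (Matrix.exists_mulVec_eq_zero_iff).mpr hdet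
  have hBv : B.mulVec v = 0 := by
    funext k
    have hlt : ((Fin.castSucc k : Fin (n+1)) : ℕ) < n := by simpa using k.isLt
    have hfin : (⟨((Fin.castSucc k : Fin (n+1)) : ℕ), hlt⟩ : Fin n) = k := Fin.ext (by simp)
    have key : ∀ j, B k j * v j = B' (Fin.castSucc k) j * v j := by
      intro j
      rw [hB']
      dsimp only
      rw [dif_pos hlt, hfin]
    show ∑ j, B k j * v j = 0
    rw [Finset.sum_congr rfl (fun j _ => key j)]
    exact congr_fun hmul (Fin.castSucc k)
  apply (Matrix.exists_mulVec_eq_zero_iff).mp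
  exact ⟨v, hv, by rw [← Matrix.mulVec_mulVec, hBv, Matrix.mulVec_zero]⟩

/-- Every element of the determinantal ideal vanishes on matrices `(∑ₖ yᵢₖ zⱼₖ)`. -/
lemma eval_minorIdeal_zero (f : MvPolynomial (Fin m × Fin m) F)
    (hf : f ∈ Ideal.span (minorSet F m n)) (y z : Fin m → Fin n → F) :
    MvPolynomial.eval (fun p : Fin m × Fin m => ∑ k : Fin n, y p.1 k * z p.2 k) f = 0 := by
  set φ := fun p : Fin m × Fin m => ∑ k : Fin n, y p.1 k * z p.2 k with hφ
  refine Submodule.span_induction ?_ ?_ ?_ ?_ hf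
  · rintro g ⟨I, J, rfl⟩
    rw [RingHom.map_det, RingHom.mapMatrix_apply]
    have hmap : ((genericMatrix F m).submatrix I J).map (MvPolynomial.eval φ) =
        (Matrix.of fun k k' => y (I k) k') * (Matrix.of fun k' l => z (J l) k') := by
      ext k l
      simp [Matrix.map_apply, Matrix.submatrix_apply, genericMatrix, Matrix.mul_apply, hφ]
    rw [hmap]
    exact det_AB_zero _ _
  · simp
  · intro a b _ _ ha hb
    rw [map_add, ha, hb, add_zero]
  · intro r a _ ha
    rw [smul_eq_mul, map_mul, ha, mul_zero]

/-- Sum swap helper. -/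
lemma helperswap {β : Type*} (E : Finset β) (coef : β → F)
    (μ : β → Equiv.Perm (Fin m) → F) :
    (∑ σ : Equiv.Perm (Fin m), MvPolynomial.C (∑ p ∈ E, coef p * μ p σ) * mon F σ)
      = ∑ p ∈ E, MvPolynomial.C (coef p) *
          ∑ σ : Equiv.Perm (Fin m), MvPolynomial.C (μ p σ) * mon F σ := by
  calc (∑ σ : Equiv.Perm (Fin m), MvPolynomial.C (∑ p ∈ E, coef p * μ p σ) * mon F σ)
      = ∑ σ : Equiv.Perm (Fin m), ∑ p ∈ E,
          MvPolynomial.C (coef p) * MvPolynomial.C (μ p σ) * mon F σ := by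
        apply Finset.sum_congr rfl
        intro σ _
        rw [map_sum, Finset.sum_mul]
        apply Finset.sum_congr rfl
        intro p _
        rw [map_mul]
    _ = ∑ p ∈ E, ∑ σ : Equiv.Perm (Fin m),
          MvPolynomial.C (coef p) * MvPolynomial.C (μ p σ) * mon F σ := Finset.sum_comm
    _ = _ := by
        apply Finset.sum_congr rfl
        intro p _
        rw [Finset.mul_sum]
        apply Finset.sum_congr rfl
        intros
        rw [mul_assoc]

/-- Evaluation of a monomial combination at 0/1 indicator points. -/
lemma eval_mon_sum (ν : Equiv.Perm (Fin m) → F) (a b : Fin m → Fin n) :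
    MvPolynomial.eval (fun p : Fin m × Fin m =>
        ∑ k : Fin n, (if a p.1 = k then (1:F) else 0) * (if b p.2 = k then 1 else 0))
      (∑ σ : Equiv.Perm (Fin m), MvPolynomial.C (ν σ) * mon F σ)
    = ∑ σ ∈ Finset.univ.filter (fun σ : Equiv.Perm (Fin m) => ∀ i, a (σ i) = b i), ν σ := by
  classical
  have hind : ∀ x y : Fin n,
      (∑ k : Fin n, (if x = k then (1:F) else 0) * (if y = k then 1 else 0))
        = if x = y then 1 else 0 := by
    intro x y
    rw [Finset.sum_eq_single x]
    · rcases eq_or_ne x y with h | h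
      · simp [h]
      · simp [h, Ne.symm h]
    · intro k _ hk
      rw [if_neg (Ne.symm hk), zero_mul]
    · intro hx
      exact absurd (Finset.mem_univ x) hx
  rw [map_sum]
  rw [Finset.sum_filter]
  apply Finset.sum_congr rfl
  intro σ _
  rw [map_mul, MvPolynomial.eval_C]
  unfold mon
  rw [map_prod]
  have hprod : (∏ i : Fin m, MvPolynomial.eval (fun p : Fin m × Fin m =>
      ∑ k : Fin n, (if a p.1 = k then (1:F) else 0) * (if b p.2 = k then 1 else 0))
        (MvPolynomial.X (σ i, i)))
      = if (∀ i, a (σ i) = b i) then 1 else 0 := by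
    have heach : ∀ i : Fin m, MvPolynomial.eval (fun p : Fin m × Fin m =>
        ∑ k : Fin n, (if a p.1 = k then (1:F) else 0) * (if b p.2 = k then 1 else 0))
          (MvPolynomial.X (σ i, i)) = if a (σ i) = b i then 1 else 0 := by
      intro i
      rw [MvPolynomial.eval_X]
      exact hind _ _
    by_cases h : ∀ i, a (σ i) = b i
    · rw [if_pos h]
      apply Finset.prod_eq_one
      intro i _
      rw [heach i, if_pos (h i)]
    · rw [if_neg h]
      push_neg at h
      obtain ⟨i, hi⟩ := h
      apply Finset.prod_eq_zero (Finset.mem_univ i)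
      rw [heach i, if_neg hi]
  rw [hprod]
  split_ifs
  · rw [mul_one]
  · rw [mul_zero]

/-- Piece B: a good-supported coefficient vector satisfying the vanishing conditions is zero. -/
lemma pieceB (hm : n + 1 ≤ m) (ν : Equiv.Perm (Fin m) → F)
    (hsupp : ∀ σ : Equiv.Perm (Fin m), ¬ (∀ i, lds σ i ≤ n) → ν σ = 0)
    (hK : ∀ a b : Fin m → Fin n,
      ∑ σ ∈ Finset.univ.filter (fun σ : Equiv.Perm (Fin m) => ∀ i, a (σ i) = b i), ν σ = 0) :
    ν = 0 := by
  classical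
  by_contra hne
  have hex : ∃ σ, ν σ ≠ 0 := by
    by_contra h
    push_neg at h
    exact hne (funext h)
  set supp := Finset.univ.filter (fun σ : Equiv.Perm (Fin m) => ν σ ≠ 0) with hsuppdef
  have hsne : supp.Nonempty := by
    obtain ⟨σ, hσ⟩ := hex
    exact ⟨σ, by simp [hsuppdef, hσ]⟩
  obtain ⟨σ0, hσ0mem, hmax⟩ := Finset.exists_max_image supp invCount hsne
  have hσ0ne : ν σ0 ≠ 0 := (Finset.mem_filter.mp hσ0mem).2
  have hgood : ∀ i, lds σ0 i ≤ n := by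
    by_contra h
    exact hσ0ne (hsupp σ0 h)
  have hd : ∀ i : Fin m, lds σ0 i - 1 < n := by
    intro i
    have h1 := lds_pos σ0 i
    have h2 := hgood i
    omega
  set d : Fin m → Fin n := fun i => ⟨lds σ0 i - 1, hd i⟩ with hddef
  have hKab := hK (fun r => d (σ0⁻¹ r)) d
  rw [Finset.sum_eq_single σ0] at hKab
  · exact hσ0ne hKab
  · intro σ hσ hneq
    have hcond : ∀ i, d (σ0⁻¹ (σ i)) = d i := by
      intro i
      exact (Finset.mem_filter.mp hσ).2 i
    set τ := σ0⁻¹ * σ with hτdef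
    have hτne : τ ≠ 1 := by
      intro h
      apply hneq
      have : σ0 * τ = σ0 * 1 := by rw [h]
      rw [hτdef, ← mul_assoc, mul_inv_cancel, one_mul, mul_one] at this
      exact this
    have hτd : ∀ x, d (τ x) = d x := fun x => hcond x
    have hinc : ∀ i j : Fin m, i < j → d i = d j → σ0 i < σ0 j := by
      intro i j hij hdij
      have hlds : lds σ0 i = lds σ0 j := by
        have h1 := lds_pos σ0 i
        have h2 := lds_pos σ0 j
        have := congr_arg Fin.val hdij
        simp only [hddef] at this
        omega
      rcases lt_trichotomy (σ0 i) (σ0 j) with h | h | h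
      · exact h
      · exact absurd (σ0.injective h) hij.ne
      · exact absurd (lds_lt σ0 hij h) (by omega)
    have hlt : invCount σ0 < invCount (σ0 * τ) :=
      invCount_lt_of_increasing d σ0 hinc _ τ rfl hτd hτne
    have hστ : σ0 * τ = σ := by
      rw [hτdef, ← mul_assoc, mul_inv_cancel, one_mul]
    rw [hστ] at hlt
    by_contra hνσ
    have : σ ∈ supp := by simp [hsuppdef, hνσ]
    exact absurd (hmax σ this) (not_le.mpr hlt)
  · intro h
    exfalso
    apply h
    refine Finset.mem_filter.mpr ⟨Finset.mem_univ _, ?_⟩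
    intro i
    show d (σ0⁻¹ (σ0 i)) = d i
    rw [← Equiv.Perm.mul_apply, inv_mul_cancel, Equiv.Perm.one_apply]

set_option maxHeartbeats 1000000 in
/-- Piece A: every permutation monomial is, modulo the determinantal ideal,
a combination of monomials of permutations without long decreasing subsequences. -/
lemma pieceA : ∀ (N : ℕ) (π : Equiv.Perm (Fin m)), invCount π = N →
    ∃ μ : Equiv.Perm (Fin m) → F,
      (∀ σ : Equiv.Perm (Fin m), ¬ (∀ i, lds σ i ≤ n) → μ σ = 0) ∧
      mon F π - (∑ σ : Equiv.Perm (Fin m), MvPolynomial.C (μ σ) * mon F σ)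
        ∈ Ideal.span (minorSet F m n) := by
  intro N
  induction N using Nat.strong_induction_on with
  | _ N ih =>
  intro π hN
  classical
  by_cases hgood : ∀ i, lds π i ≤ n
  · refine ⟨fun σ => if σ = π then 1 else 0, ?_, ?_⟩
    · intro σ hσ
      show (if σ = π then (1:F) else 0) = 0
      rw [if_neg]
      intro h
      exact hσ (h ▸ hgood)
    · have hsum : (∑ σ : Equiv.Perm (Fin m),
          MvPolynomial.C (if σ = π then (1:F) else 0) * mon F σ) = mon F π := by
        rw [Finset.sum_eq_single π]
        · rw [if_pos rfl, map_one, one_mul]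
        · intro σ _ hσ
          rw [if_neg hσ, map_zero, zero_mul]
        · intro h
          exact absurd (Finset.mem_univ π) h
      rw [hsum, sub_self]
      exact Ideal.zero_mem _
  · push_neg at hgood
    obtain ⟨i0, hi0⟩ := hgood
    obtain ⟨c, hcmono, hcdec, -⟩ := lds_chain π n i0 (by omega)
    set e := Equiv.ofInjective c hcmono.injective with he
    set τ : Equiv.Perm (Fin (n+1)) → Equiv.Perm (Fin m) := fun p => p.extendDomain e with hτ
    set dB : Fin m → Option (Fin m) := fun x => if x ∈ Set.range c then none else some x
      with hdB
    have hπdec : ∀ i j : Fin m, i < j → dB i = dB j → π j < π i := by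
      intro i j hij hdij
      simp only [hdB] at hdij
      by_cases hi : i ∈ Set.range c
      · by_cases hj : j ∈ Set.range c
        · obtain ⟨l, rfl⟩ := hi
          obtain ⟨l', rfl⟩ := hj
          exact hcdec l l' (hcmono.lt_iff_lt.mp hij)
        · rw [if_pos hi, if_neg hj] at hdij
          exact absurd hdij (by simp)
      · by_cases hj : j ∈ Set.range c
        · rw [if_neg hi, if_pos hj] at hdij
          exact absurd hdij (by simp)
        · rw [if_neg hi, if_neg hj] at hdij
          exact absurd (Option.some_injective _ hdij) hij.ne
    have hτfix : ∀ (p : Equiv.Perm (Fin (n+1))) (x : Fin m), x ∉ Set.range c → τ p x = x := by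
      intro p x hx
      exact Equiv.Perm.extendDomain_apply_not_subtype _ _ hx
    have hτim : ∀ (p : Equiv.Perm (Fin (n+1))) (l : Fin (n+1)), τ p (c l) = c (p l) := by
      intro p l
      have := Equiv.Perm.extendDomain_apply_image p e l
      simp only [he, Equiv.ofInjective_apply] at this
      exact this
    have hdτ : ∀ (p : Equiv.Perm (Fin (n+1))) (x : Fin m), dB (τ p x) = dB x := by
      intro p x
      by_cases hx : x ∈ Set.range c
      · obtain ⟨l, rfl⟩ := hx
        rw [hτim]
        simp only [hdB]
        rw [if_pos (Set.mem_range_self (p l)), if_pos (Set.mem_range_self l)]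
      · rw [hτfix p x hx]
    have hτne : ∀ p : Equiv.Perm (Fin (n+1)), p ≠ 1 → τ p ≠ 1 := by
      intro p hp h1
      have : ∃ l, p l ≠ l := by
        by_contra h
        push_neg at h
        exact hp (Equiv.ext h)
      obtain ⟨l, hl⟩ := this
      have := hτim p l
      rw [h1] at this
      simp only [Equiv.Perm.one_apply] at this
      exact hl (hcmono.injective this.symm)
    have H : ∀ p : Equiv.Perm (Fin (n+1)), ∃ μ : Equiv.Perm (Fin m) → F,
        (∀ σ : Equiv.Perm (Fin m), ¬ (∀ i, lds σ i ≤ n) → μ σ = 0) ∧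
        (p ≠ 1 → mon F (π * τ p) - (∑ σ : Equiv.Perm (Fin m),
            MvPolynomial.C (μ σ) * mon F σ) ∈ Ideal.span (minorSet F m n)) := by
      intro p
      by_cases hp : p = 1
      · exact ⟨0, fun _ _ => rfl, fun h => absurd hp h⟩
      · have hlt : invCount (π * τ p) < N :=
          hN ▸ invCount_lt_of_decreasing dB π hπdec (τ p) (hdτ p) (hτne p hp)
        obtain ⟨μ, h1, h2⟩ := ih _ hlt (π * τ p) rfl
        exact ⟨μ, h1, fun _ => h2⟩
    choose μf hμsupp hμmem using H
    set E := Finset.univ.erase (1 : Equiv.Perm (Fin (n+1))) with hE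
    refine ⟨fun σ => ∑ p ∈ E, (-((Equiv.Perm.sign p : ℤ) : F)) * μf p σ, ?_, ?_⟩
    · intro σ hσ
      apply Finset.sum_eq_zero
      intro p _
      rw [hμsupp p σ hσ, mul_zero]
    · have hrel := minor_relation (F := F) π c hcmono
      set D := Matrix.det ((genericMatrix F m).submatrix
          (⟨fun k => π (c k), fun a b hab => hcmono.injective (π.injective hab)⟩ :
            Fin (n+1) ↪ Fin m)
          (⟨c, hcmono.injective⟩ : Fin (n+1) ↪ Fin m)) *
        ∏ i ∈ (Finset.univ.image c)ᶜ, MvPolynomial.X (π i, i) with hD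
      have hDmem : D ∈ Ideal.span (minorSet F m n) := by
        rw [hD]
        exact Ideal.mul_mem_right _ _ (Ideal.subset_span ⟨_, _, rfl⟩)
      have hsplit := Finset.add_sum_erase Finset.univ
        (fun p : Equiv.Perm (Fin (n+1)) =>
          MvPolynomial.C ((Equiv.Perm.sign p : ℤ) : F) * mon F (π * τ p))
        (Finset.mem_univ 1)
      have hτ1 : τ 1 = 1 := by
        ext x
        by_cases hx : x ∈ Set.range c
        · obtain ⟨l, rfl⟩ := hx
          rw [hτim]
          simp
        · rw [hτfix 1 x hx]
          simp
      have hone : MvPolynomial.C ((Equiv.Perm.sign (1 : Equiv.Perm (Fin (n+1))) : ℤ) : F) *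
          mon F (π * τ 1) = mon F π := by
        rw [hτ1, mul_one, map_one]
        simp
      rw [hone] at hsplit
      have hmonπ : mon F π = D -
          ∑ p ∈ E, MvPolynomial.C ((Equiv.Perm.sign p : ℤ) : F) * mon F (π * τ p) := by
        rw [eq_sub_iff_add_eq]
        exact hsplit.trans hrel
      have hG := helperswap (F := F) E (fun p => -((Equiv.Perm.sign p : ℤ) : F)) μf
      set G : Equiv.Perm (Fin (n+1)) → MvPolynomial (Fin m × Fin m) F :=
        fun p => ∑ σ : Equiv.Perm (Fin m), MvPolynomial.C (μf p σ) * mon F σ with hGdef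
      have heq : mon F π - (∑ σ : Equiv.Perm (Fin m),
            MvPolynomial.C (∑ p ∈ E, (-((Equiv.Perm.sign p : ℤ) : F)) * μf p σ) * mon F σ)
          = D - ∑ p ∈ E, MvPolynomial.C ((Equiv.Perm.sign p : ℤ) : F) *
              (mon F (π * τ p) - G p) := by
        rw [hmonπ, hG]
        have h1 : ∑ p ∈ E, MvPolynomial.C ((Equiv.Perm.sign p : ℤ) : F) *
              (mon F (π * τ p) - G p)
            = (∑ p ∈ E, MvPolynomial.C ((Equiv.Perm.sign p : ℤ) : F) * mon F (π * τ p))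
              - ∑ p ∈ E, MvPolynomial.C ((Equiv.Perm.sign p : ℤ) : F) * G p := by
          rw [← Finset.sum_sub_distrib]
          apply Finset.sum_congr rfl
          intros
          ring
        have h2 : ∑ p ∈ E, MvPolynomial.C (-((Equiv.Perm.sign p : ℤ) : F)) * G p
            = - ∑ p ∈ E, MvPolynomial.C ((Equiv.Perm.sign p : ℤ) : F) * G p := by
          rw [← Finset.sum_neg_distrib]
          apply Finset.sum_congr rfl
          intros
          rw [map_neg, neg_mul]
        rw [h1, h2]
        ring
      rw [heq]
      apply Ideal.sub_mem _ hDmem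
      apply Ideal.sum_mem
      intro p hp
      have hpne : p ≠ 1 := Finset.ne_of_mem_erase hp
      exact Ideal.mul_mem_left _ _ (hμmem p hpne)

end poly

/-- Second fundamental theorem instance: a polynomial of the form
`q(X) = Σ_π λ_π Π_i x_{π(i),i}` vanishing on all matrices `(yᵢ(z_j))` of rank ≤ n
lies in the ideal generated by the `(n+1)×(n+1)` minors. -/
theorem sft_determinantal_ideal (F : Type*) [Field F] [IsAlgClosed F] [CharZero F]
    (m n : ℕ) (hm : n + 1 ≤ m) (lam : Equiv.Perm (Fin m) → F)
    (q : MvPolynomial (Fin m × Fin m) F)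
    (hq : q = ∑ π : Equiv.Perm (Fin m), MvPolynomial.C (lam π) *
      ∏ i : Fin m, MvPolynomial.X (π i, i))
    (hvan : ∀ (y z : Fin m → Fin n → F),
      MvPolynomial.eval (fun p : Fin m × Fin m => ∑ k : Fin n, y p.1 k * z p.2 k) q = 0) :
    q ∈ Ideal.span {p : MvPolynomial (Fin m × Fin m) F |
      ∃ (I J : Fin (n + 1) ↪ Fin m),
        p = Matrix.det ((genericMatrix F m).submatrix I J)} := by
  classical
  have hA : ∀ π : Equiv.Perm (Fin m), ∃ μ : Equiv.Perm (Fin m) → F,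
      (∀ σ : Equiv.Perm (Fin m), ¬ (∀ i, lds σ i ≤ n) → μ σ = 0) ∧
      mon F π - (∑ σ : Equiv.Perm (Fin m), MvPolynomial.C (μ σ) * mon F σ)
        ∈ Ideal.span (minorSet F m n) :=
    fun π => pieceA (invCount π) π rfl
  choose μf hμsupp hμmem using hA
  set ν : Equiv.Perm (Fin m) → F := fun σ => ∑ π : Equiv.Perm (Fin m), lam π * μf π σ with hν
  set r := ∑ σ : Equiv.Perm (Fin m), MvPolynomial.C (ν σ) * mon F σ with hr
  have hqmon : q = ∑ π : Equiv.Perm (Fin m), MvPolynomial.C (lam π) * mon F π := hq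
  have hqr : q - r ∈ Ideal.span (minorSet F m n) := by
    rw [hqmon, hr, hν, helperswap Finset.univ lam μf, ← Finset.sum_sub_distrib]
    apply Ideal.sum_mem
    intro π _
    have : MvPolynomial.C (lam π) * mon F π -
        MvPolynomial.C (lam π) * (∑ σ : Equiv.Perm (Fin m), MvPolynomial.C (μf π σ) * mon F σ)
        = MvPolynomial.C (lam π) *
          (mon F π - ∑ σ : Equiv.Perm (Fin m), MvPolynomial.C (μf π σ) * mon F σ) := by ring
    rw [this]
    exact Ideal.mul_mem_left _ _ (hμmem π)
  have hνK : ∀ a b : Fin m → Fin n,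
      ∑ σ ∈ Finset.univ.filter (fun σ : Equiv.Perm (Fin m) => ∀ i, a (σ i) = b i), ν σ = 0 := by
    intro a b
    have h1 := hvan (fun i k => if a i = k then (1:F) else 0)
      (fun j k => if b j = k then (1:F) else 0)
    have h2 := eval_minorIdeal_zero _ hqr (fun i k => if a i = k then (1:F) else 0)
      (fun j k => if b j = k then (1:F) else 0)
    rw [map_sub] at h2
    rw [h1, zero_sub, neg_eq_zero] at h2
    rw [hr] at h2
    rw [eval_mon_sum ν a b] at h2
    exact h2
  have hν0 : ν = 0 := by
    apply pieceB hm ν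
    · intro σ hσ
      rw [hν]
      apply Finset.sum_eq_zero
      intro π _
      rw [hμsupp π σ hσ, mul_zero]
    · exact hνK
  have hr0 : r = 0 := by
    rw [hr]
    apply Finset.sum_eq_zero
    intro σ _
    rw [show ν σ = 0 from congrFun hν0 σ, map_zero, zero_mul]
  rw [hr0, sub_zero] at hqr
  exact hqr
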